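/- arXiv:2001.03222 — 3 statements merged into one kernel-verified Lean document; each statement's English description precedes it below -/
import Mathlib

section
/- Let g be a monic polynomial of degree e > 0 over F_q and let d be a positive integer with d < e. Let λ*_i denote the number of distinct monic irreducible factors of g of degree i, and suppose k ≤ d is the least integer with λ*_k > 0. Then the number N of monic polynomials f of degree d with gcd(g, f) ≠ 1 satisfies λ*_k · q^(d-k) − C(λ*_k, 2) · q^(max(d−2k, 0)) ≤ N ≤ λ*_k · q^(d-k) + Σ_{i=k+1}^{d} λ*_i · q^(d-i). -/
open Polynomial Finset in
/-- The finset of monic polynomials of degree `n` over a finite field. -/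
noncomputable def monicFinsetAux (F : Type*) [Field F] [Fintype F] [DecidableEq F] (n : ℕ) :
    Finset (Polynomial F) :=
  letI : Fintype {p : F[X] // p.Monic ∧ p.natDegree = n} :=
    Fintype.ofEquiv (Fin n → F)
      (((monicEquivDegreeLT n).trans (degreeLTEquiv F n).toEquiv).symm)
  Finset.univ.map (Function.Embedding.subtype (fun p : F[X] => p.Monic ∧ p.natDegree = n))

open Polynomial Finset in
lemma mem_monicFinsetAux {F : Type*} [Field F] [Fintype F] [DecidableEq F] {n : ℕ} {f : F[X]} :
    f ∈ monicFinsetAux F n ↔ f.Monic ∧ f.natDegree = n := by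
  simp [monicFinsetAux]

open Polynomial Finset in
lemma card_monicFinsetAux (F : Type*) [Field F] [Fintype F] [DecidableEq F] (n : ℕ) :
    (monicFinsetAux F n).card = Fintype.card F ^ n := by
  letI : Fintype {p : F[X] // p.Monic ∧ p.natDegree = n} :=
    Fintype.ofEquiv (Fin n → F)
      (((monicEquivDegreeLT n).trans (degreeLTEquiv F n).toEquiv).symm)
  rw [monicFinsetAux, Finset.card_map, Finset.card_univ,
    Fintype.card_congr ((monicEquivDegreeLT n).trans (degreeLTEquiv F n).toEquiv)]
  simp

open Polynomial Finset in
lemma card_dvd_filterAux {F : Type*} [Field F] [Fintype F] [DecidableEq F]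
    {p : F[X]} (hp : p.Monic) {i d : ℕ} (hpi : p.natDegree = i) (hid : i ≤ d)
    [DecidablePred fun f : F[X] => p ∣ f] :
    ((monicFinsetAux F d).filter (fun f => p ∣ f)).card = Fintype.card F ^ (d - i) := by
  rw [← card_monicFinsetAux F (d - i)]
  symm
  apply Finset.card_bij (fun h _ => p * h)
  · intro h hh
    rw [mem_monicFinsetAux] at hh
    rw [Finset.mem_filter, mem_monicFinsetAux]
    refine ⟨⟨hp.mul hh.1, ?_⟩, dvd_mul_right _ _⟩
    rw [natDegree_mul hp.ne_zero hh.1.ne_zero, hpi, hh.2]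
    omega
  · intro a ha b hb hab
    exact mul_left_cancel₀ hp.ne_zero hab
  · intro f hf
    rw [Finset.mem_filter, mem_monicFinsetAux] at hf
    obtain ⟨⟨hfm, hfd⟩, h, rfl⟩ := hf
    have hh : h ≠ 0 := by rintro rfl; rw [mul_zero] at hfm; exact hfm.ne_zero rfl
    have hhm : h.Monic := hp.of_mul_monic_left hfm
    refine ⟨h, ?_, rfl⟩
    rw [mem_monicFinsetAux]
    refine ⟨hhm, ?_⟩
    rw [natDegree_mul hp.ne_zero hh, hpi] at hfd
    omega

open Finset in
/-- Bonferroni-type lower bound for the cardinality of a finite union. -/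
lemma bonferroniAux {α β : Type*} [DecidableEq β] (s : Finset α) (f : α → Finset β) (c : ℕ)
    (h : ∀ a ∈ s, ∀ b ∈ s, a ≠ b → ((f a ∩ f b).card ≤ c)) :
    (∑ a ∈ s, ((f a).card : ℤ)) - (s.card.choose 2) * c ≤ ((s.biUnion f).card : ℤ) := by
  classical
  induction s using Finset.induction_on with
  | empty => simp
  | @insert a s ha ih =>
    rw [Finset.biUnion_insert, Finset.sum_insert ha, Finset.card_insert_of_notMem ha]
    have hinter : ((f a ∩ s.biUnion f).card : ℤ) ≤ (s.card : ℤ) * c := by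
      have h1 : f a ∩ s.biUnion f = s.biUnion (fun b => f a ∩ f b) := by
        ext x; simp [Finset.mem_biUnion]; tauto
      rw [h1]
      calc ((s.biUnion fun b => f a ∩ f b).card : ℤ)
          ≤ (∑ b ∈ s, ((f a ∩ f b).card : ℤ)) := by
            exact_mod_cast Finset.card_biUnion_le
        _ ≤ ∑ _b ∈ s, (c : ℤ) := by
            apply Finset.sum_le_sum
            intro b hb
            exact_mod_cast h a (Finset.mem_insert_self a s) b
              (Finset.mem_insert_of_mem hb) (fun hab => ha (hab ▸ hb))
        _ = (s.card : ℤ) * c := by rw [Finset.sum_const]; push_cast; ring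
    have hunion := Finset.card_union_add_card_inter (f a) (s.biUnion f)
    have hchoose : (s.card + 1).choose 2 = s.card.choose 2 + s.card := by
      rw [Nat.choose_succ_succ, Nat.choose_one_right, add_comm]
    have ih' := ih (fun x hx y hy hxy =>
      h x (Finset.mem_insert_of_mem hx) y (Finset.mem_insert_of_mem hy) hxy)
    have hcast : ((f a ∪ s.biUnion f).card : ℤ) + ((f a ∩ s.biUnion f).card : ℤ)
        = ((f a).card : ℤ) + ((s.biUnion f).card : ℤ) := by exact_mod_cast hunion
    rw [hchoose]
    push_cast
    linarith

open Polynomial UniqueFactorizationMonoid in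
/-- Non-coprimality over a field is equivalent to a common normalized irreducible factor. -/
lemma not_coprime_iff_existsAux {F : Type*} [Field F] [DecidableEq F] {g f : Polynomial F}
    (hg : g ≠ 0) :
    ¬ IsCoprime g f ↔ ∃ p ∈ (normalizedFactors g).toFinset, p ∣ f := by
  constructor
  · intro hnc
    have hgcd_unit : ¬ IsUnit (EuclideanDomain.gcd g f) := fun h =>
      hnc (EuclideanDomain.gcd_isUnit_iff.mp h)
    have hgcd_ne : EuclideanDomain.gcd g f ≠ 0 := fun h => by
      rw [EuclideanDomain.gcd_eq_zero_iff] at h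
      exact hg h.1
    obtain ⟨r, hr_irr, hr_dvd⟩ := WfDvdMonoid.exists_irreducible_factor hgcd_unit hgcd_ne
    have hrg : r ∣ g := hr_dvd.trans (EuclideanDomain.gcd_dvd_left g f)
    have hrf : r ∣ f := hr_dvd.trans (EuclideanDomain.gcd_dvd_right g f)
    obtain ⟨q, hq_mem, hq_assoc⟩ := exists_mem_normalizedFactors_of_dvd hg hr_irr hrg
    exact ⟨q, Multiset.mem_toFinset.mpr hq_mem, hq_assoc.symm.dvd.trans hrf⟩
  · rintro ⟨p, hp, hpf⟩ hc
    rw [Multiset.mem_toFinset] at hp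
    exact (prime_of_normalized_factor p hp).not_unit
      (hc.isUnit_of_dvd' (dvd_of_mem_normalizedFactors hp) hpf)

open Polynomial Finset in
lemma card_inter_leAux {F : Type*} [Field F] [Fintype F] [DecidableEq F]
    {p p' : F[X]} (hpm : p.Monic) (hp'm : p'.Monic)
    (hpi : Irreducible p) (hp'i : Irreducible p') (hne : p ≠ p') {k d : ℕ}
    (hpk : p.natDegree = k) (hp'k : p'.natDegree = k)
    [DecidablePred fun f : F[X] => p ∣ f] [DecidablePred fun f : F[X] => p' ∣ f] :
    (((monicFinsetAux F d).filter (fun f => p ∣ f)) ∩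
      ((monicFinsetAux F d).filter (fun f => p' ∣ f))).card ≤ Fintype.card F ^ (d - 2 * k) := by
  classical
  have hnd : ¬ p' ∣ p := by
    intro hdvd
    exact hne (eq_of_monic_of_associated hpm hp'm
      ((hp'i.associated_of_dvd hpi hdvd).symm))
  have hp'prime : Prime p' := (UniqueFactorizationMonoid.irreducible_iff_prime).mp hp'i
  have hsub : ((monicFinsetAux F d).filter (fun f => p ∣ f)) ∩
      ((monicFinsetAux F d).filter (fun f => p' ∣ f)) ⊆
      (monicFinsetAux F d).filter (fun f => p * p' ∣ f) := by
    intro f hf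
    simp only [Finset.mem_inter, Finset.mem_filter] at hf ⊢
    obtain ⟨⟨hfM, hpf⟩, ⟨-, hp'f⟩⟩ := hf
    obtain ⟨h, rfl⟩ := hpf
    refine ⟨hfM, ?_⟩
    exact mul_dvd_mul_left p ((hp'prime.dvd_mul.mp hp'f).resolve_left hnd)
  by_cases h2k : 2 * k ≤ d
  · calc _ ≤ ((monicFinsetAux F d).filter (fun f => p * p' ∣ f)).card :=
        Finset.card_le_card hsub
      _ = Fintype.card F ^ (d - 2 * k) := by
        apply card_dvd_filterAux (hpm.mul hp'm) _ h2k
        rw [natDegree_mul hpm.ne_zero hp'm.ne_zero, hpk, hp'k]; ring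
  · have hempty : ((monicFinsetAux F d).filter (fun f => p * p' ∣ f)) = ∅ := by
      rw [Finset.filter_eq_empty_iff]
      intro f hf hdvd
      rw [mem_monicFinsetAux] at hf
      have := Polynomial.natDegree_le_of_dvd hdvd hf.1.ne_zero
      rw [natDegree_mul hpm.ne_zero hp'm.ne_zero, hpk, hp'k, hf.2] at this
      omega
    have := Finset.card_le_card hsub
    rw [hempty] at this
    simp only [Finset.card_empty, Nat.le_zero] at this
    omega

open UniqueFactorizationMonoid in
/-- Bounds on the number `N` of monic polynomials `f` of degree `d` with
`gcd(g,f) ≠ 1`, where `g` is monic of degree `e > d`, `λ*_i` is the number of distinct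
monic irreducible factors of `g` of degree `i`, and `k ≤ d` is the least index with
`λ*_k > 0`. -/
theorem count_not_coprime_bounds {F : Type*} [Field F] [Fintype F] [DecidableEq F]
    (q e d k : ℕ) (hq : Fintype.card F = q)
    (g : Polynomial F) (hgm : g.Monic) (hge : g.natDegree = e) (hd : 0 < d) (hde : d < e)
    (lam : ℕ → ℕ)
    (hlam : ∀ i, lam i =
      ((normalizedFactors g).toFinset.filter (fun p => p.natDegree = i)).card)
    (hk : 0 < lam k) (hkd : k ≤ d) (hkleast : ∀ j, 0 < lam j → k ≤ j) :
    (lam k : ℤ) * q ^ (d - k) - (lam k).choose 2 * q ^ (max (d - 2 * k) 0)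
        ≤ (Nat.card {f : Polynomial F // f.Monic ∧ f.natDegree = d ∧ ¬ IsCoprime g f} : ℤ) ∧
      (Nat.card {f : Polynomial F // f.Monic ∧ f.natDegree = d ∧ ¬ IsCoprime g f} : ℤ)
        ≤ (lam k : ℤ) * q ^ (d - k) + ∑ i ∈ Finset.Icc (k + 1) d, (lam i : ℤ) * q ^ (d - i) := by
  classical
  subst hq
  have hg0 : g ≠ 0 := hgm.ne_zero
  set P : Finset (Polynomial F) := (normalizedFactors g).toFinset with hP
  have hPmonic : ∀ p ∈ P, p.Monic := by
    intro p hp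
    rw [hP, Multiset.mem_toFinset] at hp
    rw [← normalize_normalized_factor p hp]
    exact Polynomial.monic_normalize (prime_of_normalized_factor p hp).ne_zero
  have hPirr : ∀ p ∈ P, Irreducible p := by
    intro p hp
    rw [hP, Multiset.mem_toFinset] at hp
    exact irreducible_of_normalized_factor p hp
  have hPk : ∀ p ∈ P, k ≤ p.natDegree := by
    intro p hp
    apply hkleast
    rw [hlam]
    exact Finset.card_pos.mpr ⟨p, Finset.mem_filter.mpr ⟨hp, rfl⟩⟩
  set S : Finset (Polynomial F) :=
    (monicFinsetAux F d).filter (fun f => ¬ IsCoprime g f) with hSdef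
  have hNcard :
      Nat.card {f : Polynomial F // f.Monic ∧ f.natDegree = d ∧ ¬ IsCoprime g f} = S.card := by
    rw [← Nat.card_eq_finsetCard]
    apply Nat.card_congr
    apply Equiv.subtypeEquivRight
    intro f
    simp [hSdef, Finset.mem_filter, mem_monicFinsetAux, and_assoc]
  set Pd : Finset (Polynomial F) := P.filter (fun p => p.natDegree ≤ d) with hPd
  have hS : S = Pd.biUnion (fun p => (monicFinsetAux F d).filter (fun f => p ∣ f)) := by
    ext f
    simp only [hSdef, hPd, Finset.mem_filter, Finset.mem_biUnion]
    constructor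
    · rintro ⟨hfM, hnc⟩
      obtain ⟨p, hp, hpf⟩ := (not_coprime_iff_existsAux hg0).mp hnc
      have hfm := (mem_monicFinsetAux.mp hfM)
      have hdeg := Polynomial.natDegree_le_of_dvd hpf hfm.1.ne_zero
      exact ⟨p, ⟨hp, by omega⟩, hfM, hpf⟩
    · rintro ⟨p, ⟨hp, -⟩, hfM, hpf⟩
      exact ⟨hfM, (not_coprime_iff_existsAux hg0).mpr ⟨p, hp, hpf⟩⟩
  -- upper bound
  have hupper : (S.card : ℤ) ≤ (lam k : ℤ) * (Fintype.card F : ℤ) ^ (d - k)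
      + ∑ i ∈ Finset.Icc (k + 1) d, (lam i : ℤ) * (Fintype.card F : ℤ) ^ (d - i) := by
    have h1 : S.card ≤ ∑ p ∈ Pd, Fintype.card F ^ (d - p.natDegree) := by
      rw [hS]
      refine le_trans Finset.card_biUnion_le (le_of_eq ?_)
      apply Finset.sum_congr rfl
      intro p hp
      rw [hPd, Finset.mem_filter] at hp
      exact card_dvd_filterAux (hPmonic p hp.1) rfl hp.2
    have h2 : ∑ p ∈ Pd, Fintype.card F ^ (d - p.natDegree)
        = ∑ i ∈ Finset.Icc k d, lam i * Fintype.card F ^ (d - i) := by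
      have hmaps : ∀ p ∈ Pd, p.natDegree ∈ Finset.Icc k d := by
        intro p hp
        rw [hPd, Finset.mem_filter] at hp
        rw [Finset.mem_Icc]
        exact ⟨hPk p hp.1, hp.2⟩
      rw [← Finset.sum_fiberwise_of_maps_to hmaps (fun p => Fintype.card F ^ (d - p.natDegree))]
      apply Finset.sum_congr rfl
      intro i hi
      rw [Finset.mem_Icc] at hi
      have h3 : Pd.filter (fun p => p.natDegree = i) = P.filter (fun p => p.natDegree = i) := by
        rw [hPd, Finset.filter_filter]
        apply Finset.filter_congr
        intro p _
        constructor
        · rintro ⟨-, h⟩; exact h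
        · intro h; exact ⟨le_trans (le_of_eq h) hi.2, h⟩
      have h4 : ∀ p ∈ Pd.filter (fun p => p.natDegree = i),
          Fintype.card F ^ (d - p.natDegree) = Fintype.card F ^ (d - i) := by
        intro p hp
        rw [Finset.mem_filter] at hp
        rw [hp.2]
      rw [Finset.sum_congr rfl h4, Finset.sum_const, h3, ← hlam, smul_eq_mul]
    have hIcc : Finset.Icc k d = insert k (Finset.Icc (k + 1) d) := by
      ext i; simp only [Finset.mem_Icc, Finset.mem_insert]; omega
    have h4 : ∑ i ∈ Finset.Icc k d, lam i * Fintype.card F ^ (d - i)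
        = lam k * Fintype.card F ^ (d - k)
          + ∑ i ∈ Finset.Icc (k + 1) d, lam i * Fintype.card F ^ (d - i) := by
      rw [hIcc, Finset.sum_insert (by simp)]
    calc (S.card : ℤ) ≤ ((∑ i ∈ Finset.Icc k d, lam i * Fintype.card F ^ (d - i) : ℕ) : ℤ) := by
          exact_mod_cast h1.trans (le_of_eq h2)
      _ = _ := by rw [h4]; push_cast; ring
  -- lower bound
  have hlower : (lam k : ℤ) * (Fintype.card F : ℤ) ^ (d - k)
      - (lam k).choose 2 * (Fintype.card F : ℤ) ^ (d - 2 * k) ≤ (S.card : ℤ) := by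
    set Pk : Finset (Polynomial F) := P.filter (fun p => p.natDegree = k) with hPkdef
    have hcardPk : Pk.card = lam k := (hlam k).symm
    have hbon := bonferroniAux Pk (fun p => (monicFinsetAux F d).filter (fun f => p ∣ f))
      (Fintype.card F ^ (d - 2 * k)) ?_
    · have hsum : ∑ p ∈ Pk, (((monicFinsetAux F d).filter (fun f => p ∣ f)).card : ℤ)
          = (lam k : ℤ) * (Fintype.card F : ℤ) ^ (d - k) := by
        have hc : ∀ p ∈ Pk, (((monicFinsetAux F d).filter (fun f => p ∣ f)).card : ℤ)
            = ((Fintype.card F ^ (d - k) : ℕ) : ℤ) := by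
          intro p hp
          rw [hPkdef, Finset.mem_filter] at hp
          rw [card_dvd_filterAux (hPmonic p hp.1) hp.2 hkd]
        rw [Finset.sum_congr rfl hc, Finset.sum_const, hcardPk]
        push_cast
        ring
      have hsubS : Pk.biUnion (fun p => (monicFinsetAux F d).filter (fun f => p ∣ f)) ⊆ S := by
        rw [hS]
        apply Finset.biUnion_subset_biUnion_of_subset_left
        intro p hp
        rw [hPkdef, Finset.mem_filter] at hp
        rw [hPd, Finset.mem_filter]
        exact ⟨hp.1, by omega⟩
      have hcardle := Finset.card_le_card hsubS
      rw [hsum, hcardPk] at hbon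
      calc (lam k : ℤ) * (Fintype.card F : ℤ) ^ (d - k)
            - (lam k).choose 2 * (Fintype.card F : ℤ) ^ (d - 2 * k)
          ≤ ((Pk.biUnion (fun p => (monicFinsetAux F d).filter (fun f => p ∣ f))).card : ℤ) := by
            exact_mod_cast hbon
        _ ≤ (S.card : ℤ) := by exact_mod_cast hcardle
    · intro p hp p' hp' hne
      rw [hPkdef, Finset.mem_filter] at hp hp'
      exact card_inter_leAux (hPmonic p hp.1) (hPmonic p' hp'.1) (hPirr p hp.1)
        (hPirr p' hp'.1) hne hp.2 hp'.2
  have hmax : max (d - 2 * k) 0 = d - 2 * k := by omega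
  rw [hNcard, hmax]
  exact ⟨hlower, hupper⟩
end

section
/- Let g be a monic polynomial of degree e over F_q, d a positive integer with d < e, λ*_i the number of distinct monic irreducible factors of g of degree i, and k ≤ d the least integer with λ*_k > 0. Then the probability P₀ that a uniformly random monic polynomial f of degree d satisfies gcd(g, f) = 1 is bounded by: 1 − λ*_k/q^k − Σ_{i=k+1}^{d} λ*_i/q^i ≤ P₀ ≤ 1 − λ*_k/q^k + C(λ*_k, 2)/q^(min(2k, d)). -/
open Polynomial

section Aux

variable {F : Type*} [Field F] [Fintype F] [DecidableEq F]

/-- Monic polynomials of degree `n` correspond to polynomials of degree `< n`. -/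
noncomputable def monicDegEquiv (n : ℕ) :
    {f : F[X] // f.Monic ∧ f.natDegree = n} ≃ (degreeLT F n) where
  toFun f := ⟨f.1 - X ^ n, by
    obtain ⟨f, hm, hn⟩ := f
    simp only
    rw [mem_degreeLT]
    have h1 : f.degree = (X ^ n : F[X]).degree := by
      rw [degree_X_pow, ← hn, degree_eq_natDegree hm.ne_zero]
    have h2 := degree_sub_lt h1 hm.ne_zero (by simp [hm.leadingCoeff])
    rwa [degree_eq_natDegree hm.ne_zero, hn] at h2⟩
  invFun v := ⟨X ^ n + v.1, by
    have hv : (v : F[X]).degree < (n : WithBot ℕ) := mem_degreeLT.1 v.2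
    have hdeg : (X ^ n + (v : F[X])).degree = (n : WithBot ℕ) := by
      rw [degree_add_eq_left_of_degree_lt (by rwa [degree_X_pow]), degree_X_pow]
    exact ⟨monic_X_pow_add hv, natDegree_eq_of_degree_eq_some hdeg⟩⟩
  left_inv f := Subtype.ext (by simp only; ring)
  right_inv v := Subtype.ext (by simp only; ring)

lemma nat_card_monic (n : ℕ) :
    Nat.card {f : F[X] // f.Monic ∧ f.natDegree = n} = Fintype.card F ^ n := by
  rw [Nat.card_congr ((monicDegEquiv n).trans (degreeLTEquiv F n).toEquiv)]
  simp [Nat.card_eq_fintype_card]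

lemma finite_monic (n : ℕ) : {f : F[X] | f.Monic ∧ f.natDegree = n}.Finite := by
  rw [Set.finite_coe_iff.symm]
  exact Finite.of_equiv _ ((monicDegEquiv n).trans (degreeLTEquiv F n).toEquiv).symm

lemma ncard_monic (n : ℕ) :
    ({f : F[X] | f.Monic ∧ f.natDegree = n}).ncard = Fintype.card F ^ n := by
  rw [← Nat.card_coe_set_eq]
  exact nat_card_monic n

lemma finite_monic_dvd (h : F[X]) (n : ℕ) :
    {f : F[X] | f.Monic ∧ f.natDegree = n ∧ h ∣ f}.Finite :=
  (finite_monic n).subset (fun f hf => ⟨hf.1, hf.2.1⟩)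

lemma nat_card_monic_dvd (h : F[X]) (hm : h.Monic) (n : ℕ) (hn : h.natDegree ≤ n) :
    Nat.card {f : F[X] // f.Monic ∧ f.natDegree = n ∧ h ∣ f}
      = Fintype.card F ^ (n - h.natDegree) := by
  rw [← nat_card_monic (F := F) (n - h.natDegree)]
  refine (Nat.card_congr (Equiv.ofBijective
    (fun u => (⟨h * u.1, hm.mul u.2.1, by
        rw [natDegree_mul hm.ne_zero u.2.1.ne_zero, u.2.2]; omega,
        dvd_mul_right _ _⟩ : {f : F[X] // f.Monic ∧ f.natDegree = n ∧ h ∣ f})) ?_)).symm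
  constructor
  · rintro ⟨u, hu⟩ ⟨v, hv⟩ huv
    have := congrArg Subtype.val huv
    simp only at this
    exact Subtype.ext (mul_left_cancel₀ hm.ne_zero this)
  · rintro ⟨f, hfm, hfd, u, rfl⟩
    have hu0 : u ≠ 0 := fun h0 => hfm.ne_zero (by rw [h0, mul_zero])
    have hum : u.Monic := by
      have := leadingCoeff_mul h u
      rw [hfm.leadingCoeff, hm.leadingCoeff, one_mul] at this
      exact this.symm
    have hud : u.natDegree = n - h.natDegree := by
      rw [natDegree_mul hm.ne_zero hu0] at hfd; omega
    exact ⟨⟨u, hum, hud⟩, rfl⟩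

lemma ncard_monic_dvd (h : F[X]) (hm : h.Monic) (n : ℕ) (hn : h.natDegree ≤ n) :
    ({f : F[X] | f.Monic ∧ f.natDegree = n ∧ h ∣ f}).ncard
      = Fintype.card F ^ (n - h.natDegree) := by
  rw [← Nat.card_coe_set_eq]
  exact nat_card_monic_dvd h hm n hn

lemma ncard_monic_dvd_zero (h : F[X]) (n : ℕ) (hn : n < h.natDegree) :
    ({f : F[X] | f.Monic ∧ f.natDegree = n ∧ h ∣ f}).ncard = 0 := by
  have he : {f : F[X] | f.Monic ∧ f.natDegree = n ∧ h ∣ f} = (∅ : Set F[X]) := by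
    ext f
    simp only [Set.mem_setOf_eq, Set.mem_empty_iff_false, iff_false]
    rintro ⟨hfm, hfd, u, rfl⟩
    have hu0 : u ≠ 0 := fun h0 => hfm.ne_zero (by rw [h0, mul_zero])
    have hh0 : h ≠ 0 := fun h0 => hfm.ne_zero (by rw [h0, zero_mul])
    rw [natDegree_mul hh0 hu0] at hfd
    omega
  rw [he, Set.ncard_empty]

end Aux

lemma ncard_biUnion_le' {α ι : Type*} (s : Finset ι) (A : ι → Set α)
    (hfin : ∀ i, (A i).Finite) :
    (⋃ i ∈ s, A i).ncard ≤ ∑ i ∈ s, (A i).ncard := by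
  classical
  induction s using Finset.induction_on with
  | empty => simp
  | @insert x s hx ih =>
    rw [Finset.sum_insert hx, Finset.set_biUnion_insert]
    exact (Set.ncard_union_le _ _).trans (Nat.add_le_add_left ih _)

lemma bonferroni_two {α ι : Type*} (A : ι → Set α) (hfin : ∀ i, (A i).Finite) (a t : ℕ)
    (s : Finset ι) (ha : ∀ i ∈ s, a ≤ (A i).ncard)
    (ht : ∀ i ∈ s, ∀ j ∈ s, i ≠ j → (A i ∩ A j).ncard ≤ t) :
    s.card * a ≤ (⋃ i ∈ s, A i).ncard + s.card.choose 2 * t := by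
  classical
  induction s using Finset.induction_on with
  | empty => simp
  | @insert x s hx ih =>
    have ha' : ∀ i ∈ s, a ≤ (A i).ncard := fun i hi => ha i (Finset.mem_insert_of_mem hi)
    have ht' : ∀ i ∈ s, ∀ j ∈ s, i ≠ j → (A i ∩ A j).ncard ≤ t := fun i hi j hj =>
      ht i (Finset.mem_insert_of_mem hi) j (Finset.mem_insert_of_mem hj)
    have IH := ih ha' ht'
    have hUfin : (⋃ i ∈ s, A i).Finite := Set.Finite.biUnion s.finite_toSet (fun i _ => hfin i)
    have key := Set.ncard_union_add_ncard_inter (A x) (⋃ i ∈ s, A i) (hfin x) hUfin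
    have hint : (A x ∩ ⋃ i ∈ s, A i).ncard ≤ s.card * t := by
      have heq : A x ∩ ⋃ i ∈ s, A i = ⋃ i ∈ s, (A x ∩ A i) := by
        simp [Set.inter_iUnion]
      rw [heq]
      calc (⋃ i ∈ s, A x ∩ A i).ncard ≤ ∑ i ∈ s, (A x ∩ A i).ncard :=
            ncard_biUnion_le' s _ (fun i => (hfin x).subset Set.inter_subset_left)
        _ ≤ ∑ _i ∈ s, t := Finset.sum_le_sum (fun i hi => ht x (Finset.mem_insert_self x s) i
            (Finset.mem_insert_of_mem hi) (fun h => hx (h ▸ hi)))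
        _ = s.card * t := by rw [Finset.sum_const, smul_eq_mul]
    have hax : a ≤ (A x).ncard := ha x (Finset.mem_insert_self x s)
    have hch : (s.card + 1).choose 2 = s.card.choose 2 + s.card := by
      rw [Nat.choose_succ_succ, Nat.choose_one_right, Nat.add_comm]
    rw [Finset.card_insert_of_notMem hx, Finset.set_biUnion_insert, hch]
    -- arithmetic
    nlinarith [key, hint, IH, hax]

open UniqueFactorizationMonoid in
/-- Bounds on the probability `P₀` that a uniformly random monic polynomial `f` of
degree `d` is coprime to a fixed monic `g` of degree `e > d`:
`1 - λ*_k/q^k - Σ_{i=k+1}^d λ*_i/q^i ≤ P₀ ≤ 1 - λ*_k/q^k + C(λ*_k,2)/q^(min(2k,d))`. -/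
theorem prob_coprime_bounds {F : Type*} [Field F] [Fintype F] [DecidableEq F]
    (q e d k : ℕ) (hq : Fintype.card F = q)
    (g : Polynomial F) (hgm : g.Monic) (hge : g.natDegree = e) (hd : 0 < d) (hde : d < e)
    (lam : ℕ → ℕ)
    (hlam : ∀ i, lam i =
      ((normalizedFactors g).toFinset.filter (fun p => p.natDegree = i)).card)
    (hk : 0 < lam k) (hkd : k ≤ d) (hkleast : ∀ j, 0 < lam j → k ≤ j) :
    1 - (lam k : ℝ) / q ^ k - ∑ i ∈ Finset.Icc (k + 1) d, (lam i : ℝ) / q ^ i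
        ≤ (Nat.card {f : Polynomial F // f.Monic ∧ f.natDegree = d ∧ IsCoprime g f} : ℝ) / q ^ d ∧
      (Nat.card {f : Polynomial F // f.Monic ∧ f.natDegree = d ∧ IsCoprime g f} : ℝ) / q ^ d
        ≤ 1 - (lam k : ℝ) / q ^ k + ((lam k).choose 2 : ℝ) / q ^ (min (2 * k) d) := by
  classical
  subst hq
  have hg0 : g ≠ 0 := hgm.ne_zero
  have hq0 : 0 < Fintype.card F := Fintype.card_pos
  have hqR : (0 : ℝ) < (Fintype.card F : ℝ) := by exact_mod_cast hq0
  set P : Finset F[X] := (normalizedFactors g).toFinset with hPdef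
  have hPirr : ∀ p ∈ P, Irreducible p := fun p hp =>
    irreducible_of_normalized_factor p (Multiset.mem_toFinset.1 hp)
  have hPdvd : ∀ p ∈ P, p ∣ g := fun p hp =>
    dvd_of_mem_normalizedFactors (Multiset.mem_toFinset.1 hp)
  have hPnorm : ∀ p ∈ P, normalize p = p := fun p hp =>
    normalize_normalized_factor p (Multiset.mem_toFinset.1 hp)
  have hPmon : ∀ p ∈ P, p.Monic := fun p hp => by
    have := monic_normalize (p := p) (hPirr p hp).ne_zero
    rwa [hPnorm p hp] at this
  set A : F[X] → Set F[X] := fun p => {f | f.Monic ∧ f.natDegree = d ∧ p ∣ f} with hAdef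
  have hAfin : ∀ p, (A p).Finite := fun p => finite_monic_dvd p d
  set Nset : Set F[X] := {f | f.Monic ∧ f.natDegree = d ∧ IsCoprime g f} with hNdef
  have hNfin : Nset.Finite := (finite_monic d).subset (fun f hf => ⟨hf.1, hf.2.1⟩)
  have hNat : (Nat.card {f : Polynomial F // f.Monic ∧ f.natDegree = d ∧ IsCoprime g f}) =
      Nset.ncard := Nat.card_coe_set_eq Nset
  rw [hNat]
  -- helper for real arithmetic
  have hdiv : ∀ i : ℕ, i ≤ d → ∀ x : ℝ,
      x / (Fintype.card F : ℝ) ^ i * (Fintype.card F : ℝ) ^ d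
        = x * (Fintype.card F : ℝ) ^ (d - i) := by
    intro i hi x
    rw [div_mul_eq_mul_div, div_eq_iff (pow_ne_zero _ hqR.ne'), mul_assoc, ← pow_add,
      Nat.sub_add_cancel hi]
  constructor
  · -- Lower bound
    have hcover : {f : F[X] | f.Monic ∧ f.natDegree = d} ⊆ Nset ∪ ⋃ p ∈ P, A p := by
      rintro f ⟨hfm, hfd⟩
      by_cases hc : IsCoprime g f
      · exact Or.inl ⟨hfm, hfd, hc⟩
      · right
        have hu : ¬ IsUnit (EuclideanDomain.gcd g f) := fun h =>
          hc (EuclideanDomain.gcd_isUnit_iff.mp h)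
        have h0 : EuclideanDomain.gcd g f ≠ 0 := fun h =>
          hg0 (EuclideanDomain.gcd_eq_zero_iff.mp h).1
        obtain ⟨r, hr, hrd⟩ := WfDvdMonoid.exists_irreducible_factor hu h0
        obtain ⟨p, hpmem, hpass⟩ := exists_mem_normalizedFactors_of_dvd hg0 hr
          (hrd.trans (EuclideanDomain.gcd_dvd_left g f))
        refine Set.mem_biUnion (Multiset.mem_toFinset.2 hpmem) ⟨hfm, hfd, ?_⟩
        exact hpass.symm.dvd.trans (hrd.trans (EuclideanDomain.gcd_dvd_right g f))
    have hUfin : (⋃ p ∈ P, A p).Finite :=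
      Set.Finite.biUnion P.finite_toSet (fun p _ => hAfin p)
    have h1 : Fintype.card F ^ d ≤ Nset.ncard + ∑ p ∈ P, (A p).ncard := by
      calc Fintype.card F ^ d = ({f : F[X] | f.Monic ∧ f.natDegree = d}).ncard :=
            (ncard_monic d).symm
        _ ≤ (Nset ∪ ⋃ p ∈ P, A p).ncard := Set.ncard_le_ncard hcover (hNfin.union hUfin)
        _ ≤ Nset.ncard + (⋃ p ∈ P, A p).ncard := Set.ncard_union_le _ _
        _ ≤ Nset.ncard + ∑ p ∈ P, (A p).ncard := by
            exact Nat.add_le_add_left (ncard_biUnion_le' P A hAfin) _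
    have hsum : ∑ p ∈ P, (A p).ncard
        = ∑ i ∈ Finset.Icc k d, lam i * Fintype.card F ^ (d - i) := by
      rw [← Finset.sum_filter_of_ne (p := fun p => p.natDegree ≤ d)
        (fun p hp hne => by
          by_contra hgt
          exact hne (ncard_monic_dvd_zero p d (by omega)))]
      rw [← Finset.sum_fiberwise_of_maps_to (t := Finset.Icc k d) (g := fun p => p.natDegree)
        (fun p hp => by
          rw [Finset.mem_filter] at hp
          rw [Finset.mem_Icc]
          refine ⟨hkleast _ ?_, hp.2⟩
          rw [hlam p.natDegree]
          exact Finset.card_pos.2 ⟨p, Finset.mem_filter.2 ⟨hp.1, rfl⟩⟩)]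
      refine Finset.sum_congr rfl (fun i hi => ?_)
      rw [Finset.mem_Icc] at hi
      have hfe : Finset.filter (fun p => p.natDegree = i)
            (Finset.filter (fun p => p.natDegree ≤ d) P)
          = Finset.filter (fun p => p.natDegree = i) P := by
        rw [Finset.filter_filter]
        exact Finset.filter_congr (fun p _ => by constructor <;> (intro h; first | exact h.2 | exact ⟨h ▸ hi.2, h⟩))
      rw [hfe]
      have : ∀ p ∈ Finset.filter (fun p => p.natDegree = i) P,
          (A p).ncard = Fintype.card F ^ (d - i) := by
        intro p hp
        rw [Finset.mem_filter] at hp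
        rw [hAdef]
        have := ncard_monic_dvd p (hPmon p hp.1) d (hp.2 ▸ hi.2)
        rwa [hp.2] at this
      rw [Finset.sum_congr rfl this, Finset.sum_const, smul_eq_mul, ← hlam i]
    have hins : insert k (Finset.Icc (k + 1) d) = Finset.Icc k d := by
      rw [Finset.Icc_add_one_left_eq_Ioc]; exact Finset.Ioc_insert_left hkd
    have hlowR : ((Fintype.card F : ℝ)) ^ d ≤ (Nset.ncard : ℝ)
        + ((lam k : ℝ) * (Fintype.card F : ℝ) ^ (d - k)
          + ∑ i ∈ Finset.Icc (k + 1) d, (lam i : ℝ) * (Fintype.card F : ℝ) ^ (d - i)) := by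
      rw [hsum, ← hins, Finset.sum_insert (by simp)] at h1
      exact_mod_cast h1
    rw [le_div_iff₀ (pow_pos hqR d)]
    have hexp : (1 - (lam k : ℝ) / (Fintype.card F : ℝ) ^ k
          - ∑ i ∈ Finset.Icc (k + 1) d, (lam i : ℝ) / (Fintype.card F : ℝ) ^ i)
          * (Fintype.card F : ℝ) ^ d
        = (Fintype.card F : ℝ) ^ d - (lam k : ℝ) * (Fintype.card F : ℝ) ^ (d - k)
          - ∑ i ∈ Finset.Icc (k + 1) d, (lam i : ℝ) * (Fintype.card F : ℝ) ^ (d - i) := by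
      rw [sub_mul, sub_mul, one_mul, hdiv k hkd, Finset.sum_mul]
      congr 1
      refine Finset.sum_congr rfl (fun i hi => ?_)
      rw [Finset.mem_Icc] at hi
      exact hdiv i hi.2 _
    rw [hexp]
    linarith
  · -- Upper bound
    set Pk : Finset F[X] := P.filter (fun p => p.natDegree = k) with hPkdef
    have hPkcard : Pk.card = lam k := (hlam k).symm
    set U : Set F[X] := ⋃ p ∈ Pk, A p with hUdef
    have hUfin : U.Finite := Set.Finite.biUnion Pk.finite_toSet (fun p _ => hAfin p)
    have hdisj : Disjoint Nset U := by
      rw [Set.disjoint_iff]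
      rintro f ⟨⟨hfm, hfd, hc⟩, hfU⟩
      obtain ⟨p, hpPk, hpf⟩ := Set.mem_iUnion₂.1 hfU
      rw [Finset.mem_filter] at hpPk
      exact (hPirr p hpPk.1).not_isUnit (hc.isUnit_of_dvd' (hPdvd p hpPk.1) hpf.2.2)
    have hsub : Nset ∪ U ⊆ {f : F[X] | f.Monic ∧ f.natDegree = d} := by
      rintro f (⟨h1, h2, _⟩ | hfU)
      · exact ⟨h1, h2⟩
      · obtain ⟨p, _, hpf⟩ := Set.mem_iUnion₂.1 hfU
        exact ⟨hpf.1, hpf.2.1⟩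
    have hNU : Nset.ncard + U.ncard ≤ Fintype.card F ^ d := by
      rw [← Set.ncard_union_eq hdisj hNfin hUfin, ← ncard_monic d]
      exact Set.ncard_le_ncard hsub (finite_monic d)
    set t : ℕ := Fintype.card F ^ (d - min (2 * k) d) with htdef
    have hbon := bonferroni_two A hAfin (Fintype.card F ^ (d - k)) t Pk
      (fun p hp => by
        rw [Finset.mem_filter] at hp
        rw [hAdef]
        have := ncard_monic_dvd p (hPmon p hp.1) d (hp.2 ▸ hkd)
        rw [hp.2] at this
        exact this.ge)
      (fun p hp p' hp' hne => by
        rw [Finset.mem_filter] at hp hp'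
        have hcop : IsCoprime p p' := by
          rw [(hPirr p hp.1).coprime_iff_not_dvd]
          intro hdvd
          have hass := ((hPirr p hp.1).dvd_irreducible_iff_associated (hPirr p' hp'.1)).1 hdvd
          exact hne (dvd_antisymm_of_normalize_eq (hPnorm p hp.1) (hPnorm p' hp'.1)
            hass.dvd hass.symm.dvd)
        have hsub2 : A p ∩ A p' ⊆ A (p * p') := by
          rintro f ⟨⟨hm1, hd1, hdvd1⟩, ⟨_, _, hdvd2⟩⟩
          exact ⟨hm1, hd1, hcop.mul_dvd hdvd1 hdvd2⟩
        have hdeg : (p * p').natDegree = 2 * k := by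
          rw [natDegree_mul (hPirr p hp.1).ne_zero (hPirr p' hp'.1).ne_zero, hp.2, hp'.2]
          omega
        refine (Set.ncard_le_ncard hsub2 (hAfin _)).trans ?_
        rcases le_or_gt (2 * k) d with hle | hlt
        · rw [hAdef]
          have := ncard_monic_dvd (p * p') ((hPmon p hp.1).mul (hPmon p' hp'.1)) d
            (hdeg ▸ hle)
          rw [hdeg] at this
          rw [this, htdef, min_eq_left hle]
        · rw [hAdef]
          have := ncard_monic_dvd_zero (p * p') d (by omega)
          rw [this]
          exact Nat.zero_le _)
    rw [hPkcard] at hbon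
    -- hbon : lam k * card^(d-k) ≤ U.ncard + (lam k).choose 2 * t
    rw [div_le_iff₀ (pow_pos hqR d)]
    have hmin : min (2 * k) d ≤ d := min_le_right _ _
    have hexp : (1 - (lam k : ℝ) / (Fintype.card F : ℝ) ^ k
          + ((lam k).choose 2 : ℝ) / (Fintype.card F : ℝ) ^ (min (2 * k) d))
          * (Fintype.card F : ℝ) ^ d
        = (Fintype.card F : ℝ) ^ d - (lam k : ℝ) * (Fintype.card F : ℝ) ^ (d - k)
          + ((lam k).choose 2 : ℝ) * (t : ℝ) := by
      rw [add_mul, sub_mul, one_mul, hdiv k hkd, hdiv _ hmin, htdef]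
      push_cast
      ring
    rw [hexp]
    have hNUR : (Nset.ncard : ℝ) + (U.ncard : ℝ) ≤ (Fintype.card F : ℝ) ^ d := by
      exact_mod_cast hNU
    have hbonR : (lam k : ℝ) * (Fintype.card F : ℝ) ^ (d - k)
        ≤ (U.ncard : ℝ) + ((lam k).choose 2 : ℝ) * (t : ℝ) := by
      exact_mod_cast hbon
    linarith
end

section
/- Let g be a monic polynomial of degree e over F_q with factorization pattern (λ₁, …, λ_e) (so g has λ_i irreducible factors of degree i counted with multiplicity), and let k be the least index with λ_k > 0. For any i with k ≤ i ≤ e, the number η_i of distinct monic divisors of g of degree i satisfies η_i ≤ [X^i] Π_{j=k}^{i} (1 + X^j)^{λ_j}, the coefficient of X^i in the indicated polynomial. -/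
open Polynomial

lemma coeff_prod_one_add_pow (d : Multiset ℕ) (n : ℕ) :
    ((d.map (fun j => (1 + X ^ j : Polynomial ℤ))).prod).coeff n
      = ((d.powerset.filter (fun t => t.sum = n)).card : ℤ) := by
  induction d using Multiset.induction generalizing n with
  | empty =>
    rcases eq_or_ne n 0 with rfl | h
    · simp [Multiset.powerset_zero, Multiset.filter_singleton]
    · simp [Polynomial.coeff_one, h, Multiset.filter_singleton, Ne.symm h]
  | cons a d ih =>
    rw [Multiset.map_cons, Multiset.prod_cons, add_mul, one_mul, Polynomial.coeff_add,
      mul_comm, Polynomial.coeff_mul_X_pow', Multiset.powerset_cons, Multiset.filter_add,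
      Multiset.filter_map, Multiset.card_add, Multiset.card_map]
    by_cases hn : a ≤ n
    · rw [if_pos hn, ih, ih]
      have : Multiset.filter ((fun t => Multiset.sum t = n) ∘ (Multiset.cons a)) d.powerset
          = Multiset.filter (fun t => Multiset.sum t = n - a) d.powerset := by
        apply Multiset.filter_congr
        intro t _
        simp only [Function.comp, Multiset.sum_cons]
        omega
      rw [this]
      push_cast
      ring
    · rw [if_neg hn, ih]
      have : Multiset.filter ((fun t => Multiset.sum t = n) ∘ (Multiset.cons a)) d.powerset
          = 0 := by
        rw [Multiset.filter_eq_nil]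
        intro t _
        simp only [Function.comp, Multiset.sum_cons]
        omega
      rw [this]
      simp

lemma powerset_map_aux {α β : Type*} (f : α → β) (s : Multiset α) :
    (s.map f).powerset = s.powerset.map (Multiset.map f) := by
  induction s using Multiset.induction with
  | empty => simp
  | cons a s ih =>
    rw [Multiset.map_cons, Multiset.powerset_cons, Multiset.powerset_cons, Multiset.map_add, ih,
      Multiset.map_map, Multiset.map_map]
    congr 1
    apply Multiset.map_congr rfl
    intro t _
    simp


open UniqueFactorizationMonoid in
lemma nf_factor_monic {F : Type*} [Field F] [DecidableEq F] {m p : Polynomial F}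
    (hp : p ∈ normalizedFactors m) : p.Monic := by
  rw [← normalize_normalized_factor p hp]
  exact Polynomial.monic_normalize (irreducible_of_normalized_factor p hp).ne_zero

open UniqueFactorizationMonoid in
lemma nf_prod_eq {F : Type*} [Field F] [DecidableEq F] {m : Polynomial F} (hm : m.Monic) :
    ((normalizedFactors m).prod) = m := by
  have hmon : ∀ p ∈ normalizedFactors m, p.Monic := fun p hp => nf_factor_monic hp
  have hpm : ((normalizedFactors m).prod).Monic := by
    have := Polynomial.monic_multiset_prod_of_monic (normalizedFactors m) id
      (by simpa using hmon)
    simpa using this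
  exact Polynomial.eq_of_monic_of_associated hpm hm (prod_normalizedFactors hm.ne_zero)

open UniqueFactorizationMonoid in
/-- Let `g` be monic of degree `e` with factorization pattern `(λ₁,…,λ_e)` (irreducible
factors counted with multiplicity) and `k` the least index with `λ_k > 0`.  Then for
`k ≤ i ≤ e`, the number `η_i` of distinct monic divisors of `g` of degree `i` is at most
the coefficient of `X^i` in `Π_{j=k}^{i} (1+X^j)^{λ_j} ∈ ℤ[X]`. -/
theorem count_divisors_le_coeff {F : Type*} [Field F] [DecidableEq F]
    (e k i : ℕ)
    (g : Polynomial F) (hgm : g.Monic) (hge : g.natDegree = e)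
    (lam : ℕ → ℕ)
    (hlam : ∀ j, lam j =
      Multiset.card ((normalizedFactors g).filter (fun p => p.natDegree = j)))
    (hk : 0 < lam k) (hkleast : ∀ j, 0 < lam j → k ≤ j)
    (hki : k ≤ i) (hie : i ≤ e) :
    (Nat.card {m : Polynomial F // m.Monic ∧ m ∣ g ∧ m.natDegree = i} : ℤ)
      ≤ (∏ j ∈ Finset.Icc k i, ((1 + Polynomial.X ^ j) ^ lam j : Polynomial ℤ)).coeff i := by
  have hg0 : g ≠ 0 := hgm.ne_zero
  set D : Multiset (Polynomial F) := normalizedFactors g with hD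
  set D' : Multiset (Polynomial F) := D.filter (fun p => p.natDegree ≤ i) with hD'
  set d : Multiset ℕ := D'.map Polynomial.natDegree with hd
  have hcount : ∀ j ∈ Finset.Icc k i, d.count j = lam j := by
    intro j hj
    rw [Finset.mem_Icc] at hj
    rw [hd, Multiset.count_map, hD', Multiset.filter_filter, hlam j]
    congr 1
    apply Multiset.filter_congr
    intro p _
    constructor
    · rintro ⟨h1, h2⟩; omega
    · intro h; omega
  have hsub : d.toFinset ⊆ Finset.Icc k i := by
    intro j hj
    rw [Multiset.mem_toFinset, hd, Multiset.mem_map] at hj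
    obtain ⟨p, hp, rfl⟩ := hj
    rw [hD', Multiset.mem_filter] at hp
    refine Finset.mem_Icc.mpr ⟨?_, hp.2⟩
    apply hkleast
    rw [hlam, Multiset.card_pos_iff_exists_mem]
    exact ⟨p, Multiset.mem_filter.mpr ⟨hp.1, rfl⟩⟩
  have hprod : (∏ j ∈ Finset.Icc k i, ((1 + Polynomial.X ^ j) ^ lam j : Polynomial ℤ))
      = ((d.map (fun j => (1 + Polynomial.X ^ j : Polynomial ℤ))).prod) := by
    calc ∏ j ∈ Finset.Icc k i, ((1 + Polynomial.X ^ j) ^ lam j : Polynomial ℤ)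
        = ∏ j ∈ Finset.Icc k i, ((1 + Polynomial.X ^ j : Polynomial ℤ)) ^ d.count j :=
          Finset.prod_congr rfl (fun j hj => by rw [hcount j hj])
      _ = ∏ j ∈ d.toFinset, ((1 + Polynomial.X ^ j : Polynomial ℤ)) ^ d.count j := by
          refine (Finset.prod_subset hsub ?_).symm
          intro j _ hj
          rw [Multiset.count_eq_zero_of_notMem (by simpa [Multiset.mem_toFinset] using hj)]
          simp
      _ = ((d.map (fun j => (1 + Polynomial.X ^ j : Polynomial ℤ))).prod) :=
          (Finset.prod_multiset_map_count d _).symm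
  rw [hprod, coeff_prod_one_add_pow]
  set P : Multiset (Multiset (Polynomial F)) :=
    D'.powerset.filter (fun t => (t.map Polynomial.natDegree).sum = i) with hP
  have hcards : (d.powerset.filter (fun t => t.sum = i)).card = P.card := by
    rw [hd, powerset_map_aux, Multiset.filter_map, Multiset.card_map, hP]
    simp [Function.comp_def]
  rw [hcards]
  have key : Nat.card {m : Polynomial F // m.Monic ∧ m ∣ g ∧ m.natDegree = i}
      ≤ Multiset.card P := by
    have hmem : ∀ (m : {m : Polynomial F // m.Monic ∧ m ∣ g ∧ m.natDegree = i}),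
        normalizedFactors m.1 ∈ P.toFinset := by
      rintro ⟨m, hm, hdvd, hdeg⟩
      have hm0 : m ≠ 0 := hm.ne_zero
      rw [Multiset.mem_toFinset, hP, Multiset.mem_filter, Multiset.mem_powerset]
      have hle : normalizedFactors m ≤ D :=
        (dvd_iff_normalizedFactors_le_normalizedFactors hm0 hg0).mp hdvd
      have hmon : ∀ p ∈ normalizedFactors m, p.Monic := fun p hp => nf_factor_monic hp
      have hdegsum : ((normalizedFactors m).map Polynomial.natDegree).sum = i := by
        rw [← Polynomial.natDegree_multiset_prod_of_monic _ hmon, nf_prod_eq hm, hdeg]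
      refine ⟨Multiset.le_filter.mpr ⟨hle, ?_⟩, hdegsum⟩
      intro p hp
      calc p.natDegree ≤ m.natDegree :=
            Polynomial.natDegree_le_of_dvd (dvd_of_mem_normalizedFactors hp) hm0
        _ = i := hdeg
    have hinj : Function.Injective
        (fun m : {m : Polynomial F // m.Monic ∧ m ∣ g ∧ m.natDegree = i} =>
          (⟨normalizedFactors m.1, hmem m⟩ : {t // t ∈ P.toFinset})) := by
      rintro ⟨m₁, hm₁, _, _⟩ ⟨m₂, hm₂, _, _⟩ h
      simp only [Subtype.mk_eq_mk] at h
      have : m₁ = m₂ := by rw [← nf_prod_eq hm₁, ← nf_prod_eq hm₂, h]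
      exact Subtype.ext this
    calc Nat.card {m : Polynomial F // m.Monic ∧ m ∣ g ∧ m.natDegree = i}
        ≤ Nat.card {t // t ∈ P.toFinset} := Nat.card_le_card_of_injective _ hinj
      _ = P.toFinset.card := Nat.card_eq_finsetCard _
      _ ≤ Multiset.card P := Multiset.toFinset_card_le _
  exact_mod_cast key
end
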